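/- There exists a constant C' > 0 such that for every real n > 0 and every ℝ-word w over X = {a, b} with coarse length k(w) ≥ 2 whose evaluation equals gₙ = ((n, 0), 0, 0), one has ℓ(w) − n ≥ C' · k(w)^{−2/3} · n. -/

import Mathlib

noncomputable section

/-- The Engel Lie group `Ē`: underlying set `ℝ² × ℝ × ℝ`, with coordinates
`(x, y)` (endpoint), `A` (signed area) and `B` (the `y`-moment). -/
@[ext]
structure Engel where
  x : ℝ
  y : ℝ
  A : ℝ
  B : ℝ

namespace Engel

instance : Mul Engel :=
  ⟨fun g h =>
    ⟨g.x + h.x, g.y + h.y,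
     g.A + h.A + (g.x * h.y - g.y * h.x) / 2,
     g.B + h.B + g.y * h.A + (2 * g.y + h.y) * (g.x * h.y - g.y * h.x) / 6⟩⟩

instance : One Engel := ⟨⟨0, 0, 0, 0⟩⟩

instance : Inv Engel := ⟨fun g => ⟨-g.x, -g.y, -g.A, -g.B + g.y * g.A⟩⟩

@[simp] lemma mul_x (g h : Engel) : (g * h).x = g.x + h.x := rfl
@[simp] lemma mul_y (g h : Engel) : (g * h).y = g.y + h.y := rfl
@[simp] lemma mul_A (g h : Engel) :
    (g * h).A = g.A + h.A + (g.x * h.y - g.y * h.x) / 2 := rfl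
@[simp] lemma mul_B (g h : Engel) :
    (g * h).B = g.B + h.B + g.y * h.A
      + (2 * g.y + h.y) * (g.x * h.y - g.y * h.x) / 6 := rfl
@[simp] lemma one_x : (1 : Engel).x = 0 := rfl
@[simp] lemma one_y : (1 : Engel).y = 0 := rfl
@[simp] lemma one_A : (1 : Engel).A = 0 := rfl
@[simp] lemma one_B : (1 : Engel).B = 0 := rfl
@[simp] lemma inv_x (g : Engel) : g⁻¹.x = -g.x := rfl
@[simp] lemma inv_y (g : Engel) : g⁻¹.y = -g.y := rfl
@[simp] lemma inv_A (g : Engel) : g⁻¹.A = -g.A := rfl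
@[simp] lemma inv_B (g : Engel) : g⁻¹.B = -g.B + g.y * g.A := rfl

instance : Group Engel where
  mul_assoc a b c := by ext <;> simp <;> ring
  one_mul a := by ext <;> simp
  mul_one a := by ext <;> simp
  inv_mul_cancel a := by
    ext <;>
      simp only [mul_x, mul_y, mul_A, mul_B, inv_x, inv_y, inv_A, inv_B,
        one_x, one_y, one_A, one_B] <;> ring

/-- `a^t`: the straight segment from `(0,0)` to `(t,t)`. -/
def aPow (t : ℝ) : Engel := ⟨t, t, 0, 0⟩

/-- `b^t`: the straight segment from `(0,0)` to `(t,-t)`. -/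
def bPow (t : ℝ) : Engel := ⟨t, -t, 0, 0⟩

end Engel

namespace Engel

/-- An ℝ-word over `X = {a, b}` is a finite sequence of pairs `(xᵢ, tᵢ)` with
`xᵢ ∈ {a, b}` (encoded as `Bool`: `true ↦ a`, `false ↦ b`) and `tᵢ ∈ ℝ`.
Its evaluation is the product `x₁^{t₁}·…·x_k^{t_k}` in `Ē`. -/
def wordEval (w : List (Bool × ℝ)) : Engel :=
  (w.map fun p => if p.1 then aPow p.2 else bPow p.2).prod

/-- The length `ℓ(w) = Σᵢ |tᵢ|` of an ℝ-word. -/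
def wordLen (w : List (Bool × ℝ)) : ℝ := (w.map fun p => |p.2|).sum

end Engel

namespace Engel

/-! ### Auxiliary development -/

/-- The `y`-increment of a single letter. -/
def dy (p : Bool × ℝ) : ℝ := if p.1 then p.2 else -p.2

/-- The Engel element of a single letter. -/
def seg (p : Bool × ℝ) : Engel := if p.1 then aPow p.2 else bPow p.2

@[simp] lemma seg_x (p : Bool × ℝ) : (seg p).x = p.2 := by
  cases hp : p.1 <;> simp [seg, hp, aPow, bPow]

@[simp] lemma seg_y (p : Bool × ℝ) : (seg p).y = dy p := by
  cases hp : p.1 <;> simp [seg, dy, hp, aPow, bPow]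

@[simp] lemma seg_A (p : Bool × ℝ) : (seg p).A = 0 := by
  cases hp : p.1 <;> simp [seg, hp, aPow, bPow]

@[simp] lemma seg_B (p : Bool × ℝ) : (seg p).B = 0 := by
  cases hp : p.1 <;> simp [seg, hp, aPow, bPow]

lemma abs_dy (p : Bool × ℝ) : |dy p| = |p.2| := by
  cases hp : p.1 <;> simp [dy, hp]

/-- Total `x`-displacement. -/
def Xsum (w : List (Bool × ℝ)) : ℝ := (w.map fun p => p.2).sum

/-- Total `y`-displacement. -/
def Ysum (w : List (Bool × ℝ)) : ℝ := (w.map dy).sum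

/-- Discrete signed `∫ y² dx` along the word, started at height `y`. -/
def Bsum (y : ℝ) : List (Bool × ℝ) → ℝ
  | [] => 0
  | p :: w => p.2 * ((y ^ 2 + y * (y + dy p) + (y + dy p) ^ 2) / 3)
      + Bsum (y + dy p) w

/-- Discrete unsigned `∫ y² ds` along the word, started at height `y`. -/
def Babs (y : ℝ) : List (Bool × ℝ) → ℝ
  | [] => 0
  | p :: w => |p.2| * ((y ^ 2 + y * (y + dy p) + (y + dy p) ^ 2) / 3)
      + Babs (y + dy p) w

/-- Maximal absolute height among partial products, started at height `y`. -/
def maxY (y : ℝ) : List (Bool × ℝ) → ℝ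
  | [] => |y|
  | p :: w => max |y| (maxY (y + dy p) w)

@[simp] lemma wordEval_nil : wordEval [] = 1 := rfl

lemma wordEval_eq (w : List (Bool × ℝ)) : wordEval w = (w.map seg).prod := rfl

lemma wordEval_append (w₁ w₂ : List (Bool × ℝ)) :
    wordEval (w₁ ++ w₂) = wordEval w₁ * wordEval w₂ := by
  simp [wordEval_eq, List.map_append]

lemma wordEval_cons (p : Bool × ℝ) (w : List (Bool × ℝ)) :
    wordEval (p :: w) = seg p * wordEval w := rfl

lemma x_eval (w : List (Bool × ℝ)) : (wordEval w).x = Xsum w := by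
  induction w with
  | nil => rfl
  | cons p w ih => rw [wordEval_cons, mul_x, seg_x, ih]; simp [Xsum]

lemma y_eval (w : List (Bool × ℝ)) : (wordEval w).y = Ysum w := by
  induction w with
  | nil => rfl
  | cons p w ih => rw [wordEval_cons, mul_y, seg_y, ih]; simp [Ysum]

lemma Ysum_append (w : List (Bool × ℝ)) (p : Bool × ℝ) :
    Ysum (w ++ [p]) = Ysum w + dy p := by
  simp [Ysum]

lemma Bsum_append (w : List (Bool × ℝ)) (p : Bool × ℝ) : ∀ y : ℝ,
    Bsum y (w ++ [p]) = Bsum y w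
      + p.2 * (((y + Ysum w) ^ 2 + (y + Ysum w) * (y + Ysum w + dy p)
          + (y + Ysum w + dy p) ^ 2) / 3) := by
  induction w with
  | nil => intro y; simp [Bsum, Ysum]
  | cons q w ih =>
      intro y
      have hc : ∀ (y : ℝ) (v : List (Bool × ℝ)), Bsum y (q :: v)
          = q.2 * ((y ^ 2 + y * (y + dy q) + (y + dy q) ^ 2) / 3)
            + Bsum (y + dy q) v := fun _ _ => rfl
      have hY : Ysum (q :: w) = dy q + Ysum w := by simp [Ysum]
      rw [List.cons_append, hc, ih (y + dy q), hc, hY]; ring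

/-- The key exact identity for the `B`-coordinate. -/
lemma B_eval (w : List (Bool × ℝ)) :
    (wordEval w).B = (wordEval w).x * (wordEval w).y ^ 2 / 6 - Bsum 0 w / 2 := by
  induction w using List.reverseRecOn with
  | nil => simp [Bsum]
  | append_singleton w p ih =>
      have hs : wordEval [p] = seg p := by simp [wordEval_eq]
      rw [wordEval_append, hs]
      simp only [mul_B, mul_x, mul_y, seg_x, seg_y, seg_A, seg_B, Bsum_append]
      rw [ih, y_eval]
      ring

lemma R_nonneg (y z : ℝ) : 0 ≤ (y ^ 2 + y * z + z ^ 2) / 3 := by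
  nlinarith [sq_nonneg (y + z), sq_nonneg (y - z)]

/-- The exact "`∫ y² |dy|`" computation for one segment. -/
lemma abs_mul_R (y z : ℝ) :
    |z - y| * ((y ^ 2 + y * z + z ^ 2) / 3) = |z ^ 3 - y ^ 3| / 3 := by
  have h3 : (0:ℝ) ≤ y ^ 2 + y * z + z ^ 2 := by
    nlinarith [sq_nonneg (y + z), sq_nonneg (y - z)]
  have h4 : (z - y) * (y ^ 2 + y * z + z ^ 2) = z ^ 3 - y ^ 3 := by ring
  calc |z - y| * ((y ^ 2 + y * z + z ^ 2) / 3)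
      = |z - y| * |y ^ 2 + y * z + z ^ 2| / 3 := by rw [abs_of_nonneg h3]; ring
    _ = |(z - y) * (y ^ 2 + y * z + z ^ 2)| / 3 := by rw [abs_mul]
    _ = |z ^ 3 - y ^ 3| / 3 := by rw [h4]

lemma key_cube (y z : ℝ) :
    |(|z| ^ 3 - |y| ^ 3)| / 3 ≤ |z - y| * ((y ^ 2 + y * z + z ^ 2) / 3) := by
  rw [abs_mul_R]
  have h1 : |(|z| ^ 3 - |y| ^ 3)| ≤ |z ^ 3 - y ^ 3| := by
    have := abs_abs_sub_abs_le_abs_sub (z ^ 3) (y ^ 3)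
    simpa [abs_pow] using this
  linarith

@[simp] lemma wordLen_nil : wordLen [] = 0 := rfl

lemma wordLen_cons (p : Bool × ℝ) (w : List (Bool × ℝ)) :
    wordLen (p :: w) = |p.2| + wordLen w := by simp [wordLen]

lemma wordLen_nonneg (w : List (Bool × ℝ)) : 0 ≤ wordLen w := by
  induction w with
  | nil => simp
  | cons p w ih => rw [wordLen_cons]; positivity

lemma Xsum_le_wordLen (w : List (Bool × ℝ)) : Xsum w ≤ wordLen w := by
  induction w with
  | nil => simp [Xsum]
  | cons p w ih =>
      rw [wordLen_cons]
      have : Xsum (p :: w) = p.2 + Xsum w := by simp [Xsum]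
      rw [this]
      have := le_abs_self p.2
      linarith

lemma abs_le_maxY (w : List (Bool × ℝ)) : ∀ y : ℝ, |y| ≤ maxY y w := by
  induction w with
  | nil => intro y; exact le_refl _
  | cons p w ih => intro y; exact le_max_left _ _

lemma maxY_nonneg (w : List (Bool × ℝ)) (y : ℝ) : 0 ≤ maxY y w :=
  le_trans (abs_nonneg y) (abs_le_maxY w y)

/-- (P1): the unsigned sum exceeds the signed one by at most the backtracking
times the square of the maximal height. -/
lemma P1 (w : List (Bool × ℝ)) : ∀ y : ℝ,
    Babs y w - Bsum y w ≤ (wordLen w - Xsum w) * (maxY y w) ^ 2 := by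
  induction w with
  | nil => intro y; simp [Babs, Bsum, Xsum]
  | cons p w ih =>
      intro y
      have hM'le : maxY (y + dy p) w ≤ maxY y (p :: w) := le_max_right _ _
      have hyle : |y| ≤ maxY y (p :: w) := le_max_left _ _
      have hzle : |y + dy p| ≤ maxY y (p :: w) :=
        le_trans (abs_le_maxY w _) hM'le
      set z := y + dy p with hz
      have e1 : Babs y (p :: w)
          = |p.2| * ((y ^ 2 + y * z + z ^ 2) / 3) + Babs z w := rfl
      have e2 : Bsum y (p :: w)
          = p.2 * ((y ^ 2 + y * z + z ^ 2) / 3) + Bsum z w := rfl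
      set M := maxY y (p :: w) with hM
      clear_value z M
      have hM0 : 0 ≤ M := le_trans (abs_nonneg y) hyle
      have hR : (y ^ 2 + y * z + z ^ 2) / 3 ≤ M ^ 2 := by
        have h1 : y ^ 2 ≤ M ^ 2 := by
          have := sq_abs y; nlinarith [hyle, abs_nonneg y]
        have h2 : z ^ 2 ≤ M ^ 2 := by
          have := sq_abs z; nlinarith [hzle, abs_nonneg z]
        have h3 : y * z ≤ M ^ 2 := by
          have hyz : y * z ≤ |y| * |z| := by
            rw [← abs_mul]; exact le_abs_self _
          nlinarith [hyle, hzle, abs_nonneg y, abs_nonneg z]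
        linarith
      have hRn : 0 ≤ (y ^ 2 + y * z + z ^ 2) / 3 := R_nonneg y z
      have ht : 0 ≤ |p.2| - p.2 := by
        have := le_abs_self p.2; linarith
      have hwl : 0 ≤ wordLen w - Xsum w := by
        have := Xsum_le_wordLen w; linarith
      have ihz := ih z
      have hM'2 : (maxY z w) ^ 2 ≤ M ^ 2 := by
        have h0 : 0 ≤ maxY z w := maxY_nonneg w z
        nlinarith [hM'le]
      have e3 : wordLen (p :: w) = |p.2| + wordLen w := wordLen_cons p w
      have e4 : Xsum (p :: w) = p.2 + Xsum w := by simp [Xsum]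
      rw [e1, e2, e3, e4]
      have k1 : (|p.2| - p.2) * ((y ^ 2 + y * z + z ^ 2) / 3)
          ≤ (|p.2| - p.2) * M ^ 2 := mul_le_mul_of_nonneg_left hR ht
      have k2 : (wordLen w - Xsum w) * (maxY z w) ^ 2
          ≤ (wordLen w - Xsum w) * M ^ 2 := mul_le_mul_of_nonneg_left hM'2 hwl
      nlinarith [ihz, k1, k2]

/-- (P2a): the unsigned sum dominates the sum of cubes over 12. -/
lemma P2a (w : List (Bool × ℝ)) : ∀ y : ℝ,
    (w.map fun p => |p.2| ^ 3).sum / 12 ≤ Babs y w := by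
  induction w with
  | nil => intro y; simp [Babs]
  | cons p w ih =>
      intro y
      set z := y + dy p with hz
      have e1 : Babs y (p :: w)
          = |p.2| * ((y ^ 2 + y * z + z ^ 2) / 3) + Babs z w := rfl
      have e2 : ((p :: w).map fun p => |p.2| ^ 3).sum
          = |p.2| ^ 3 + (w.map fun p => |p.2| ^ 3).sum := by simp
      have hd : (z - y) ^ 2 = p.2 ^ 2 := by
        rw [hz]
        cases hp : p.1 <;> simp [dy, hp] <;> ring
      clear_value z
      rw [e1, e2]
      have hR : p.2 ^ 2 / 12 ≤ (y ^ 2 + y * z + z ^ 2) / 3 := by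
        have h5 : (z - y) ^ 2 / 12 ≤ (y ^ 2 + y * z + z ^ 2) / 3 := by
          nlinarith [sq_nonneg (y + z)]
        rw [hd] at h5; exact h5
      have h1 : |p.2| * (p.2 ^ 2 / 12) ≤ |p.2| * ((y ^ 2 + y * z + z ^ 2) / 3) :=
        mul_le_mul_of_nonneg_left hR (abs_nonneg _)
      have h2 : |p.2| ^ 3 = |p.2| * p.2 ^ 2 := by
        rw [← sq_abs]; ring
      have := ih z
      rw [h2]
      linarith

/-- (P2b): discrete power-mean inequality for cubes. -/
lemma P2b (w : List (Bool × ℝ)) :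
    (wordLen w) ^ 3 ≤ ((w.length : ℝ)) ^ 2 * (w.map fun p => |p.2| ^ 3).sum := by
  induction w with
  | nil => simp
  | cons p w ih =>
      rcases eq_or_ne w [] with rfl | hw
      · simp [wordLen]
      · have hQ0 : 0 ≤ (w.map fun p => |p.2| ^ 3).sum := by
          apply List.sum_nonneg
          intro x hx
          simp only [List.mem_map] at hx
          obtain ⟨q, _, rfl⟩ := hx
          positivity
        have hk1 : (1:ℝ) ≤ (w.length : ℝ) := by
          have : 1 ≤ w.length := List.length_pos_iff.mpr hw
          exact_mod_cast this
        have hS0 : 0 ≤ wordLen w := wordLen_nonneg w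
        have ha0 : (0:ℝ) ≤ |p.2| := abs_nonneg _
        have e1 : wordLen (p :: w) = |p.2| + wordLen w := wordLen_cons p w
        have e2 : (((p :: w).length : ℝ)) = (w.length : ℝ) + 1 := by
          push_cast [List.length_cons]; ring
        have e3 : ((p :: w).map fun p => |p.2| ^ 3).sum
            = |p.2| ^ 3 + (w.map fun p => |p.2| ^ 3).sum := by simp
        set a := |p.2| with ha
        set S := wordLen w with hS
        set Q := (w.map fun p => |p.2| ^ 3).sum with hQdef
        set k := ((w.length : ℝ)) with hk
        clear_value a S Q k
        rw [e1, e2, e3]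
        have hid : (k + 1) ^ 2 * k ^ 2 * a ^ 3 + (k + 1) ^ 2 * S ^ 3
            - k ^ 2 * (a + S) ^ 3
            = (k * a - S) ^ 2 * ((k ^ 2 + 2 * k) * a + (2 * k + 1) * S) := by
          ring
        have hk0 : (0:ℝ) < k := by linarith
        have hfac : 0 ≤ (k * a - S) ^ 2 * ((k ^ 2 + 2 * k) * a + (2 * k + 1) * S) := by
          have h1 : 0 ≤ (k ^ 2 + 2 * k) * a + (2 * k + 1) * S := by positivity
          positivity
        have step1 : k ^ 2 * (a + S) ^ 3
            ≤ (k + 1) ^ 2 * k ^ 2 * a ^ 3 + (k + 1) ^ 2 * S ^ 3 := by linarith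
        have step2 : (k + 1) ^ 2 * S ^ 3 ≤ (k + 1) ^ 2 * (k ^ 2 * Q) :=
          mul_le_mul_of_nonneg_left ih (by positivity)
        have step3 : k ^ 2 * (a + S) ^ 3 ≤ k ^ 2 * ((k + 1) ^ 2 * (a ^ 3 + Q)) := by
          nlinarith [step1, step2]
        exact le_of_mul_le_mul_left (by linarith [step3]) (by positivity : (0:ℝ) < k ^ 2)

/-- (P3): the unsigned sum dominates the excursion to the maximal height. -/
lemma P3 (w : List (Bool × ℝ)) : ∀ y : ℝ,
    (2 * (maxY y w) ^ 3 - |y| ^ 3 - |y + Ysum w| ^ 3) / 3 ≤ Babs y w := by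
  induction w with
  | nil =>
      intro y
      simp only [maxY, Ysum, List.map_nil, List.sum_nil, add_zero, Babs]
      ring_nf
      linarith
  | cons p w ih =>
      intro y
      set z := y + dy p with hz
      have e1 : Babs y (p :: w)
          = |p.2| * ((y ^ 2 + y * z + z ^ 2) / 3) + Babs z w := rfl
      have e2 : maxY y (p :: w) = max |y| (maxY z w) := rfl
      have e3 : y + Ysum (p :: w) = z + Ysum w := by
        simp [Ysum, hz]; ring
      have habs : |p.2| = |z - y| := by
        rw [hz]
        cases hp : p.1 <;> simp [dy, hp]
      clear_value z
      rw [e1, e2, e3]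
      have hkey : |(|z| ^ 3 - |y| ^ 3)| / 3
          ≤ |p.2| * ((y ^ 2 + y * z + z ^ 2) / 3) := by
        rw [habs]; exact key_cube y z
      have habs1 : |z| ^ 3 - |y| ^ 3 ≤ |(|z| ^ 3 - |y| ^ 3)| := le_abs_self _
      have habs2 : |y| ^ 3 - |z| ^ 3 ≤ |(|z| ^ 3 - |y| ^ 3)| := by
        rw [abs_sub_comm]; exact le_abs_self _
      have ihz := ih z
      rcases le_total |y| (maxY z w) with hc | hc
      · rw [max_eq_right hc]
        linarith
      · rw [max_eq_left hc]
        have hzM : |z| ^ 3 ≤ (maxY z w) ^ 3 :=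
          pow_le_pow_left₀ (abs_nonneg z) (abs_le_maxY w z) 3
        linarith

/-- There exists `C' > 0` such that for every real `n > 0` and every ℝ-word `w`
over `X = {a, b}` with coarse length `k(w) ≥ 2` whose evaluation equals
`gₙ = ((n, 0), 0, 0)`, one has `ℓ(w) − n ≥ C' · k(w)^{−2/3} · n`. -/
theorem length_excess_lower_bound :
    ∃ C' : ℝ, 0 < C' ∧ ∀ n : ℝ, 0 < n → ∀ w : List (Bool × ℝ), 2 ≤ w.length →
      wordEval w = ⟨n, 0, 0, 0⟩ →
      wordLen w - n ≥ C' * (w.length : ℝ) ^ (-(2 / 3) : ℝ) * n := by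
  refine ⟨1/3, by norm_num, ?_⟩
  intro n hn w hk hw
  have hk1 : (2:ℝ) ≤ (w.length : ℝ) := by exact_mod_cast hk
  have hkpos : (0:ℝ) < (w.length : ℝ) := by linarith
  have hx : Xsum w = n := by rw [← x_eval, hw]
  have hy : Ysum w = 0 := by rw [← y_eval, hw]
  have hBsum : Bsum 0 w = 0 := by
    have hBe := B_eval w
    rw [hw] at hBe
    simp only at hBe
    nlinarith [hBe]
  have hln : n ≤ wordLen w := by rw [← hx]; exact Xsum_le_wordLen w
  have hh0 : 0 ≤ maxY 0 w := maxY_nonneg w 0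
  -- T ≤ ε h²
  have hT1 : Babs 0 w ≤ (wordLen w - n) * (maxY 0 w) ^ 2 := by
    have := P1 w 0
    rw [hBsum, hx] at this
    linarith
  -- T ≥ n³ / (12 k²)
  have hT2 : n ^ 3 / (12 * (w.length : ℝ) ^ 2) ≤ Babs 0 w := by
    have h1 : n ^ 3 ≤ (wordLen w) ^ 3 := pow_le_pow_left₀ hn.le hln 3
    have h2 := P2b w
    have h3 := P2a w 0
    rw [div_le_iff₀ (by positivity)]
    nlinarith [h1, h2, h3]
  -- T ≥ 2 h³ / 3
  have hT3 : 2 * (maxY 0 w) ^ 3 / 3 ≤ Babs 0 w := by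
    have := P3 w 0
    rw [hy] at this
    simp only [abs_zero, add_zero] at this
    linarith
  have hTpos : 0 < Babs 0 w := lt_of_lt_of_le (by positivity) hT2
  have hε0 : 0 ≤ wordLen w - n := by linarith
  -- ε³ ≥ 4T/9
  have hcube : 4 * Babs 0 w / 9 ≤ (wordLen w - n) ^ 3 := by
    set T := Babs 0 w with hT
    set ε := wordLen w - n with hε
    set h := maxY 0 w with hh
    clear_value T ε h
    have h4 : T ^ 3 ≤ (ε * h ^ 2) ^ 3 := pow_le_pow_left₀ hTpos.le hT1 3
    have h5 : (h ^ 3) ^ 2 ≤ (3 / 2 * T) ^ 2 := by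
      apply pow_le_pow_left₀ (by positivity)
      linarith
    have h6 : ε ^ 3 * (h ^ 3) ^ 2 ≤ ε ^ 3 * (3 / 2 * T) ^ 2 :=
      mul_le_mul_of_nonneg_left h5 (by positivity)
    have h7 : T ^ 3 ≤ 9 / 4 * ε ^ 3 * T ^ 2 := by nlinarith [h4, h6]
    have h8 : T * T ^ 2 ≤ (9 / 4 * ε ^ 3) * T ^ 2 := by nlinarith [h7]
    have h9 : T ≤ 9 / 4 * ε ^ 3 :=
      le_of_mul_le_mul_right (by nlinarith [h8]) (by positivity : (0:ℝ) < T ^ 2)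
    linarith
  have hfinal3 : n ^ 3 / (27 * (w.length : ℝ) ^ 2) ≤ (wordLen w - n) ^ 3 := by
    have : n ^ 3 / (27 * (w.length : ℝ) ^ 2)
        = 4 / 9 * (n ^ 3 / (12 * (w.length : ℝ) ^ 2)) := by ring
    rw [this]
    nlinarith [hT2, hcube]
  -- rpow bookkeeping
  set c := (w.length : ℝ) ^ (-(2 / 3) : ℝ) with hc
  have hcpos : 0 < c := Real.rpow_pos_of_pos hkpos _
  have hc3 : c ^ 3 = 1 / (w.length : ℝ) ^ 2 := by
    rw [hc, ← Real.rpow_natCast ((w.length : ℝ) ^ (-(2 / 3) : ℝ)) 3,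
      ← Real.rpow_mul hkpos.le]
    norm_num
  have hgoal3 : (1 / 3 * c * n) ^ 3 ≤ (wordLen w - n) ^ 3 := by
    have e : (1 / 3 * c * n) ^ 3 = 1 / 27 * c ^ 3 * n ^ 3 := by ring
    rw [e, hc3]
    calc 1 / 27 * (1 / (w.length : ℝ) ^ 2) * n ^ 3
        = n ^ 3 / (27 * (w.length : ℝ) ^ 2) := by ring
      _ ≤ (wordLen w - n) ^ 3 := hfinal3
  exact le_of_pow_le_pow_left₀ (by norm_num) hε0 hgoal3

end Engel
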